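/- Every locally stratified finite normal logic program has an answer set. -/

import Mathlib

structure NRule (α : Type) where
  head : α
  pos : Finset α
  neg : Finset α

def satRule {α : Type} (M : Set α) (r : NRule α) : Prop :=
  ↑r.pos ⊆ M → (↑r.neg ∩ M : Set α) = ∅ → r.head ∈ M

def isModel {α : Type} (M : Set α) (P : Set (NRule α)) : Prop :=
  ∀ r ∈ P, satRule M r

def reduct {α : Type} (P : Set (NRule α)) (M : Set α) : Set (NRule α) :=
  (fun r => ⟨r.head, r.pos, ∅⟩) '' {r ∈ P | (↑r.neg ∩ M : Set α) = ∅}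

def isMinModel {α : Type} (M : Set α) (P : Set (NRule α)) : Prop :=
  isModel M P ∧ ∀ M' ⊆ M, isModel M' P → M' = M

def isAnswerSet {α : Type} (M : Set α) (P : Set (NRule α)) : Prop :=
  isMinModel M (reduct P M)

def isSupported {α : Type} (M : Set α) (P : Set (NRule α)) : Prop :=
  isModel M P ∧ ∀ a ∈ M, ∃ r ∈ P, r.head = a ∧ ↑r.pos ⊆ M ∧ (↑r.neg ∩ M : Set α) = ∅

def isDefinite {α : Type} (P : Set (NRule α)) : Prop :=
  ∀ r ∈ P, r.neg = ∅

def isLocallyStratified {α : Type} (P : Set (NRule α)) : Prop :=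
  ∃ l : α → ℕ, ∀ r ∈ P, (∀ b ∈ r.pos, l b ≤ l r.head) ∧ (∀ c ∈ r.neg, l c < l r.head)

def hasLevelRanking {α : Type} (M : Set α) (P : Set (NRule α)) : Prop :=
  ∃ lr : α → ℕ, ∀ a ∈ M, ∃ r ∈ P, r.head = a ∧ ↑r.pos ⊆ M ∧ (↑r.neg ∩ M : Set α) = ∅ ∧
    ∀ b ∈ r.pos, lr b + 1 ≤ lr a


def strat {α : Type} (P : Set (NRule α)) (l : α → ℕ) : ℕ → Set α
  | 0 => ∅
  | n + 1 => ⋂₀ {S | strat P l n ⊆ S ∧ ∀ r ∈ P, l r.head = n →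
      (↑r.neg ∩ strat P l n : Set α) = ∅ → ↑r.pos ⊆ S → r.head ∈ S}

lemma strat_succ_mono {α : Type} (P : Set (NRule α)) (l : α → ℕ) (n : ℕ) :
    strat P l n ⊆ strat P l (n + 1) :=
  fun _ ha => Set.mem_sInter.2 fun _ hS => hS.1 ha

lemma strat_mono {α : Type} (P : Set (NRule α)) (l : α → ℕ) {n m : ℕ} (h : n ≤ m) :
    strat P l n ⊆ strat P l m := by
  induction m with
  | zero => simp [Nat.le_zero.1 h]
  | succ m ih =>
    rcases Nat.lt_or_ge n (m + 1) with h' | h'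
    · exact (ih (Nat.lt_succ_iff.1 h')).trans (strat_succ_mono P l m)
    · have : n = m + 1 := le_antisymm h h'
      simp [this, subset_rfl]

lemma strat_level {α : Type} (P : Set (NRule α)) (l : α → ℕ) :
    ∀ m n a, a ∈ strat P l m → l a < n → a ∈ strat P l n := by
  intro m
  induction m with
  | zero => intro n a ha; simp [strat] at ha
  | succ m ih =>
    intro n a ha hlt
    rcases Nat.lt_or_ge n (m + 1) with h' | h'
    · have hn : n ≤ m := Nat.lt_succ_iff.1 h'
      have hS0 : (strat P l m ∪ {x | n ≤ l x}) ∈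
          {S | strat P l m ⊆ S ∧ ∀ r ∈ P, l r.head = m →
            (↑r.neg ∩ strat P l m : Set α) = ∅ → ↑r.pos ⊆ S → r.head ∈ S} := by
        refine ⟨Set.subset_union_left, fun r _ hhead _ _ => Or.inr ?_⟩
        simp only [Set.mem_setOf_eq, hhead]; exact hn
      have := Set.sInter_subset_of_mem hS0 ha
      rcases this with h1 | h2
      · exact ih n a h1 hlt
      · exact absurd h2 (by simpa using hlt)
    · exact strat_mono P l h' ha

lemma strat_closed {α : Type} (P : Set (NRule α)) (l : α → ℕ) {r : NRule α} {n : ℕ}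
    (hrP : r ∈ P) (hn : l r.head = n) (hneg : (↑r.neg ∩ strat P l n : Set α) = ∅)
    (hpos : ↑r.pos ⊆ strat P l (n + 1)) : r.head ∈ strat P l (n + 1) :=
  Set.mem_sInter.2 fun S hS => hS.2 r hrP hn hneg (hpos.trans (Set.sInter_subset_of_mem hS))

theorem stmt_8 {α : Type} (P : Set (NRule α)) (hP : P.Finite)
    (hstrat : isLocallyStratified P) :
    ∃ M : Set α, isAnswerSet M P := by
  obtain ⟨l, hl⟩ := hstrat
  refine ⟨⋃ n, strat P l n, ?_, ?_⟩
  · -- M is a model of the reduct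
    rintro r' ⟨r, ⟨hrP, hneg⟩, rfl⟩
    intro hpos _
    simp only [Set.mem_iUnion]
    refine ⟨l r.head + 1, strat_closed P l hrP rfl ?_ ?_⟩
    · apply Set.eq_empty_of_subset_empty
      rw [← hneg]
      exact Set.inter_subset_inter_right _ (Set.subset_iUnion (fun n => strat P l n) _)
    · intro b hb
      have hbM : b ∈ ⋃ n, strat P l n := hpos hb
      obtain ⟨k, hk⟩ := Set.mem_iUnion.1 hbM
      exact strat_level P l k _ b hk (Nat.lt_succ_of_le ((hl r hrP).1 b hb))
  · -- minimality
    intro M' hsub hmod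
    refine Set.Subset.antisymm hsub ?_
    have key : ∀ n, strat P l n ⊆ M' := by
      intro n
      induction n with
      | zero => simp [strat]
      | succ n ih =>
        have hM' : M' ∈ {S | strat P l n ⊆ S ∧ ∀ r ∈ P, l r.head = n →
            (↑r.neg ∩ strat P l n : Set α) = ∅ → ↑r.pos ⊆ S → r.head ∈ S} := by
          refine ⟨ih, fun r hrP hhead hneg hpos => ?_⟩
          have hnegM : (↑r.neg ∩ ⋃ m, strat P l m : Set α) = ∅ := by
            apply Set.eq_empty_iff_forall_notMem.2
            rintro c ⟨hc1, hc2⟩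
            obtain ⟨k, hk⟩ := Set.mem_iUnion.1 hc2
            have : c ∈ strat P l n :=
              strat_level P l k n c hk (hhead ▸ (hl r hrP).2 c hc1)
            exact Set.eq_empty_iff_forall_notMem.1 hneg c ⟨hc1, this⟩
          have hred : (⟨r.head, r.pos, ∅⟩ : NRule α) ∈ reduct P (⋃ m, strat P l m) :=
            ⟨r, ⟨hrP, hnegM⟩, rfl⟩
          exact hmod ⟨r.head, r.pos, ∅⟩ hred hpos (by simp)
        exact Set.sInter_subset_of_mem hM'
    exact Set.iUnion_subset key
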